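/- Let $X$ be a finite connected pure 2-dimensional simplicial complex with vertex set $V$ and let $A \subsetneq V$ be nonempty such that the induced subgraph of the 1-skeleton on $A$ is connected. Construct $B$ from the edges of $X$: all edges with both endpoints in $A$, plus exactly one edge with endpoints in both $A$ and $V \setminus A$. Let $F'$ be the set of 2-faces of $X$ containing at least one edge of $E(B, W \setminus B)$ in the embedded graph. Then every 2-face in $F'$ contains at least two edges of $E(B, W\setminus B)$, and hence $|E(B, W \setminus B)| \leq 2|F(A, V\setminus A)|$. -/

import Mathlib

open scoped Classical

/-- The 1-skeleton of a pure simplicial complex given by its top-dimensional faces. -/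
def skeleton {V : Type*} (faces : Finset (Finset V)) : SimpleGraph V where
  Adj u v := u ≠ v ∧ ∃ f ∈ faces, u ∈ f ∧ v ∈ f
  symm := by
    constructor
    rintro u v ⟨h, f, hf, hu, hv⟩
    exact ⟨h.symm, f, hf, hv, hu⟩
  loopless := by
    constructor
    rintro v ⟨h, -⟩
    exact h rfl

lemma pairs_eq {V : Type*} [DecidableEq V] (W B : Finset (Finset V)) (f : Finset V)
    (hBW : B ⊆ W) (hWcard : ∀ e ∈ W, e.card = 2)
    (hfW : ∀ e : Finset V, e ⊆ f → e.card = 2 → e ∈ W) :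
    (B ×ˢ (W \ B)).filter (fun p => p.1 ≠ p.2 ∧ p.1 ⊆ f ∧ p.2 ⊆ f)
      = ((f.powersetCard 2).filter (· ∈ B)) ×ˢ ((f.powersetCard 2).filter (· ∉ B)) := by
  ext ⟨q1, q2⟩
  simp only [Finset.mem_filter, Finset.mem_product, Finset.mem_sdiff, Finset.mem_powersetCard]
  constructor
  · rintro ⟨⟨h1B, h2W, h2B⟩, hne, h1f, h2f⟩
    exact ⟨⟨⟨h1f, hWcard _ (hBW h1B)⟩, h1B⟩, ⟨h2f, hWcard _ h2W⟩, h2B⟩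
  · rintro ⟨⟨⟨h1f, h1c⟩, h1B⟩, ⟨⟨h2f, h2c⟩, h2B⟩⟩
    exact ⟨⟨h1B, ⟨hfW _ h2f h2c, h2B⟩⟩, fun h => h2B (h ▸ h1B), h1f, h2f⟩

theorem stmt19 {V : Type*} [Fintype V] [DecidableEq V]
    (faces : Finset (Finset V))
    (hpure : ∀ f ∈ faces, f.card = 3)
    (hcover : ∀ v : V, ∃ f ∈ faces, v ∈ f)
    (hconn : (skeleton faces).Connected)
    (W : Finset (Finset V))
    (hW : W = ((Finset.univ : Finset V).powersetCard 2).filter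
      (fun e => ∃ f ∈ faces, e ⊆ f))
    (A : Finset V) (hA1 : A.Nonempty) (hA2 : A ≠ Finset.univ)
    (hAconn : ((skeleton faces).induce (↑A : Set V)).Connected)
    (e₀ : Finset V) (he₀ : e₀ ∈ W)
    (he₀mix : (∃ v ∈ e₀, v ∈ A) ∧ (∃ v ∈ e₀, v ∉ A))
    (B : Finset (Finset V))
    (hB : B = W.filter (fun e => e ⊆ A) ∪ {e₀}) :
    (∀ f ∈ faces.filter (fun f => ∃ p ∈ (B ×ˢ (W \ B)).filter
        (fun p => p.1 ≠ p.2 ∧ ∃ g ∈ faces, p.1 ⊆ g ∧ p.2 ⊆ g),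
        p.1 ⊆ f ∧ p.2 ⊆ f),
      2 ≤ ((B ×ˢ (W \ B)).filter
        (fun p => p.1 ≠ p.2 ∧ p.1 ⊆ f ∧ p.2 ⊆ f)).card) ∧
    ((B ×ˢ (W \ B)).filter
        (fun p => p.1 ≠ p.2 ∧ ∃ g ∈ faces, p.1 ⊆ g ∧ p.2 ⊆ g)).card ≤
      2 * (faces.filter (fun f => (∃ v ∈ f, v ∈ A) ∧ (∃ v ∈ f, v ∉ A))).card := by
  have hWcard : ∀ e ∈ W, e.card = 2 := by
    intro e he
    rw [hW, Finset.mem_filter, Finset.mem_powersetCard] at he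
    exact he.1.2
  have hBW : B ⊆ W := by
    rw [hB]
    intro e he
    rcases Finset.mem_union.1 he with h | h
    · exact (Finset.mem_filter.1 h).1
    · rwa [Finset.mem_singleton.1 h]
  have hfW : ∀ f ∈ faces, ∀ e : Finset V, e ⊆ f → e.card = 2 → e ∈ W := by
    intro f hf e hef hec
    rw [hW, Finset.mem_filter, Finset.mem_powersetCard]
    exact ⟨⟨Finset.subset_univ _, hec⟩, f, hf, hef⟩
  have hcard3 : ∀ f ∈ faces, (f.powersetCard 2).card = 3 := by
    intro f hf
    rw [Finset.card_powersetCard, hpure f hf]; rfl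
  -- key card computation for a face
  have hsplit : ∀ f ∈ faces,
      ((f.powersetCard 2).filter (· ∈ B)).card
        + ((f.powersetCard 2).filter (· ∉ B)).card = 3 := by
    intro f hf
    rw [← hcard3 f hf]
    exact Finset.card_filter_add_card_filter_not _
  constructor
  · -- part 1
    intro f hf
    rw [Finset.mem_filter] at hf
    obtain ⟨hffaces, p, hp, hp1f, hp2f⟩ := hf
    rw [Finset.mem_filter] at hp
    have hp' : p ∈ (B ×ˢ (W \ B)).filter
        (fun p => p.1 ≠ p.2 ∧ p.1 ⊆ f ∧ p.2 ⊆ f) :=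
      Finset.mem_filter.2 ⟨hp.1, hp.2.1, hp1f, hp2f⟩
    rw [pairs_eq W B f hBW hWcard (hfW f hffaces)] at hp' ⊢
    rw [Finset.mem_product] at hp'
    have ha : 1 ≤ ((f.powersetCard 2).filter (· ∈ B)).card :=
      Finset.card_pos.2 ⟨_, hp'.1⟩
    have hb : 1 ≤ ((f.powersetCard 2).filter (· ∉ B)).card :=
      Finset.card_pos.2 ⟨_, hp'.2⟩
    rw [Finset.card_product]
    have := hsplit f hffaces
    nlinarith
  · -- part 2
    set S := (B ×ˢ (W \ B)).filter
        (fun p => p.1 ≠ p.2 ∧ ∃ g ∈ faces, p.1 ⊆ g ∧ p.2 ⊆ g) with hS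
    -- every pair's union is the witness face
    have hunion : ∀ p ∈ S, p.1 ∪ p.2 ∈ faces ∧ p.1 ⊆ p.1 ∪ p.2 ∧ p.2 ⊆ p.1 ∪ p.2 := by
      intro p hp
      rw [hS, Finset.mem_filter, Finset.mem_product, Finset.mem_sdiff] at hp
      obtain ⟨⟨h1B, h2W, h2B⟩, hne, g, hg, h1g, h2g⟩ := hp
      have h1c : p.1.card = 2 := hWcard _ (hBW h1B)
      have h2c : p.2.card = 2 := hWcard _ h2W
      have hsub : p.1 ∪ p.2 ⊆ g := Finset.union_subset h1g h2g
      have hx : ∃ x ∈ p.2, x ∉ p.1 := by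
        by_contra h
        push_neg at h
        exact hne (Finset.eq_of_subset_of_card_le h (by omega)).symm
      obtain ⟨x, hx2, hx1⟩ := hx
      have h3 : 3 ≤ (p.1 ∪ p.2).card := by
        have : insert x p.1 ⊆ p.1 ∪ p.2 :=
          Finset.insert_subset (Finset.mem_union_right _ hx2) Finset.subset_union_left
        have := Finset.card_le_card this
        rw [Finset.card_insert_of_notMem hx1, h1c] at this
        omega
      have : p.1 ∪ p.2 = g :=
        Finset.eq_of_subset_of_card_le hsub (by rw [hpure g hg]; omega)
      exact ⟨this ▸ hg, Finset.subset_union_left, Finset.subset_union_right⟩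
    have hmaps : ∀ p ∈ S, p.1 ∪ p.2 ∈
        faces.filter (fun f => (∃ v ∈ f, v ∈ A) ∧ (∃ v ∈ f, v ∉ A)) := by
      intro p hp
      obtain ⟨hg, h1g, h2g⟩ := hunion p hp
      rw [hS, Finset.mem_filter, Finset.mem_product, Finset.mem_sdiff] at hp
      obtain ⟨⟨h1B, h2W, h2B⟩, hne, -⟩ := hp
      refine Finset.mem_filter.2 ⟨hg, ?_, ?_⟩
      · -- p.1 has a vertex in A
        rw [hB, Finset.mem_union] at h1B
        rcases h1B with h | h
        · obtain ⟨hW1, hA1'⟩ := Finset.mem_filter.1 h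
          have : p.1.Nonempty := Finset.card_pos.1 (by rw [hWcard _ hW1]; omega)
          obtain ⟨v, hv⟩ := this
          exact ⟨v, h1g hv, hA1' hv⟩
        · rw [Finset.mem_singleton] at h
          obtain ⟨v, hv, hvA⟩ := he₀mix.1
          exact ⟨v, h1g (h ▸ hv), hvA⟩
      · -- p.2 has a vertex not in A
        have hnot : ¬ p.2 ⊆ A := by
          intro hsub
          apply h2B
          rw [hB]
          exact Finset.mem_union_left _ (Finset.mem_filter.2 ⟨h2W, hsub⟩)
        obtain ⟨v, hv, hvA⟩ := Finset.not_subset.1 hnot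
        exact ⟨v, h2g hv, hvA⟩
    refine Finset.card_le_mul_card_image_of_maps_to hmaps 2 ?_
    intro b hb
    rw [Finset.mem_filter] at hb
    obtain ⟨hbfaces, -⟩ := hb
    have hsub : S.filter (fun p => p.1 ∪ p.2 = b) ⊆
        (B ×ˢ (W \ B)).filter (fun p => p.1 ≠ p.2 ∧ p.1 ⊆ b ∧ p.2 ⊆ b) := by
      intro p hp
      rw [Finset.mem_filter] at hp
      obtain ⟨hpS, hpb⟩ := hp
      rw [hS, Finset.mem_filter] at hpS
      exact Finset.mem_filter.2 ⟨hpS.1, hpS.2.1,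
        hpb ▸ Finset.subset_union_left, hpb ▸ Finset.subset_union_right⟩
    calc (S.filter (fun p => p.1 ∪ p.2 = b)).card
        ≤ ((B ×ˢ (W \ B)).filter (fun p => p.1 ≠ p.2 ∧ p.1 ⊆ b ∧ p.2 ⊆ b)).card :=
          Finset.card_le_card hsub
      _ ≤ 2 := by
          rw [pairs_eq W B b hBW hWcard (hfW b hbfaces), Finset.card_product]
          have h3 := hsplit b hbfaces
          set x := ((b.powersetCard 2).filter (· ∈ B)).card with hx
          set y := ((b.powersetCard 2).filter (· ∉ B)).card with hy
          have hx3 : x ≤ 3 := by omega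
          interval_cases x <;> omega
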